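/- (Characterization with non-strict inequality, Theorem 2) Let S = {v_1, ..., v_n} be a finite nonempty set of points in ℝ^m and p ∈ ℝ^m. Then p lies in conv(S) if and only if for every point p' ∈ conv(S) with p' ≠ p there exists v_j ∈ S such that d(p', v_j) ≥ d(p, v_j). -/

import Mathlib

open Finset

lemma key_identity {m n : ℕ} (v : Fin n → EuclideanSpace ℝ (Fin m))
    (w : Fin n → ℝ) (hw1 : ∑ i, w i = 1)
    (p : EuclideanSpace ℝ (Fin m)) (hp : ∑ i, w i • v i = p)
    (x : EuclideanSpace ℝ (Fin m)) :
    ∑ i, w i * ‖x - v i‖ ^ 2 = ‖x - p‖ ^ 2 + ∑ i, w i * ‖p - v i‖ ^ 2 := by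
  have expand : ∀ i, ‖x - v i‖ ^ 2
      = ‖x - p‖ ^ 2 + 2 * inner ℝ (x - p) (p - v i) + ‖p - v i‖ ^ 2 := by
    intro i
    have h : x - v i = (x - p) + (p - v i) := by abel
    rw [h, @norm_add_sq_real]
  have cross : ∑ i, w i * inner ℝ (x - p) (p - v i) = (0 : ℝ) := by
    have : ∑ i, w i * inner ℝ (x - p) (p - v i)
        = inner ℝ (x - p) (∑ i, w i • (p - v i)) := by
      rw [inner_sum]
      congr 1; ext i
      rw [real_inner_smul_right]
    rw [this]
    have : ∑ i, w i • (p - v i) = (0 : EuclideanSpace ℝ (Fin m)) := by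
      simp only [smul_sub, Finset.sum_sub_distrib, ← Finset.sum_smul, hw1, one_smul, hp, sub_self]
    rw [this, inner_zero_right]
  calc ∑ i, w i * ‖x - v i‖ ^ 2
      = ∑ i, (w i * ‖x - p‖ ^ 2 + 2 * (w i * inner ℝ (x - p) (p - v i)) + w i * ‖p - v i‖ ^ 2) := by
        congr 1; ext i; rw [expand i]; ring
    _ = ‖x - p‖ ^ 2 + ∑ i, w i * ‖p - v i‖ ^ 2 := by
        rw [Finset.sum_add_distrib, Finset.sum_add_distrib, ← Finset.mul_sum,
          ← Finset.sum_mul, hw1, cross]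
        ring

theorem characterization_nonstrict {m n : ℕ} (hn : 0 < n)
    (v : Fin n → EuclideanSpace ℝ (Fin m)) (p : EuclideanSpace ℝ (Fin m)) :
    p ∈ convexHull ℝ (Set.range v) ↔
      ∀ p' ∈ convexHull ℝ (Set.range v), p' ≠ p →
        ∃ j : Fin n, dist p' (v j) ≥ dist p (v j) := by
  constructor
  · intro hp p' hp' hne
    by_contra hcon
    push_neg at hcon
    -- all dist p' (v j) < dist p (v j)
    rw [convexHull_range_eq_exists_affineCombination] at hp
    obtain ⟨s, w, hw0, hw1, hws⟩ := hp
    set W : Fin n → ℝ := fun i => if i ∈ s then w i else 0 with hW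
    have hW1 : ∑ i, W i = 1 := by
      rw [Finset.sum_ite_mem, Finset.univ_inter, hw1]
    have hWp : ∑ i, W i • v i = p := by
      rw [← hws, s.affineCombination_eq_linear_combination v w hw1]
      rw [show ∑ i, W i • v i = ∑ i ∈ s, W i • v i by
        refine (Finset.sum_subset (Finset.subset_univ s) ?_).symm
        intro i _ hi; simp [hW, hi]]
      exact Finset.sum_congr rfl fun i hi => by simp [hW, hi]
    have h1 := key_identity v W hW1 p hWp p'
    have h2 := key_identity v W hW1 p hWp p
    have hle : ∑ i, W i * ‖p' - v i‖ ^ 2 ≤ ∑ i, W i * ‖p - v i‖ ^ 2 := by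
      apply Finset.sum_le_sum
      intro i _
      have hWnn : 0 ≤ W i := by by_cases hi : i ∈ s <;> simp [hW, hi]; exact hw0 i hi
      apply mul_le_mul_of_nonneg_left _ hWnn
      have := hcon i
      rw [dist_eq_norm, dist_eq_norm] at this
      exact pow_le_pow_left₀ (norm_nonneg _) this.le 2
    rw [h1] at hle
    have hpos : (0:ℝ) < ‖p' - p‖ ^ 2 :=
      pow_pos (norm_pos_iff.mpr (sub_ne_zero.mpr hne)) 2
    linarith
  · intro h
    by_contra hp
    -- project p onto the hull
    have hfin : (Set.range v).Finite := Set.finite_range v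
    have hconv : Convex ℝ (convexHull ℝ (Set.range v)) := convex_convexHull ℝ _
    have hcompact : IsCompact (convexHull ℝ (Set.range v)) := hfin.isCompact_convexHull (𝕜 := ℝ)
    have hne : (convexHull ℝ (Set.range v)).Nonempty := by
      refine ⟨v ⟨0, hn⟩, subset_convexHull ℝ _ ⟨⟨0, hn⟩, rfl⟩⟩
    obtain ⟨q, hq, hqmin⟩ := exists_norm_eq_iInf_of_complete_convex hne
      (hcompact.isClosed.isComplete) hconv p
    have hinner : ∀ w ∈ convexHull ℝ (Set.range v), inner ℝ (p - q) (w - q) ≤ (0:ℝ) :=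
      (norm_eq_iInf_iff_real_inner_le_zero hconv hq).mp hqmin
    have hqp : q ≠ p := fun h' => hp (h' ▸ hq)
    obtain ⟨j, hj⟩ := h q hq hqp
    -- derive contradiction: dist q (v j) < dist p (v j)
    have hvj : v j ∈ convexHull ℝ (Set.range v) := subset_convexHull ℝ _ ⟨j, rfl⟩
    have hij := hinner (v j) hvj
    have hexp : ‖p - v j‖ ^ 2
        = ‖p - q‖ ^ 2 + 2 * inner ℝ (p - q) (q - v j) + ‖q - v j‖ ^ 2 := by
      have hsplit : p - v j = (p - q) + (q - v j) := by abel
      rw [hsplit, @norm_add_sq_real]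
    have hi' : (0:ℝ) ≤ inner ℝ (p - q) (q - v j) := by
      have hneg : q - v j = -(v j - q) := by abel
      rw [hneg, inner_neg_right]; linarith
    have hpq : (0:ℝ) < ‖p - q‖ ^ 2 :=
      pow_pos (norm_pos_iff.mpr (sub_ne_zero.mpr (fun h' => hqp h'.symm))) 2
    have hlt : ‖q - v j‖ ^ 2 < ‖p - v j‖ ^ 2 := by rw [hexp]; linarith
    rw [dist_eq_norm, dist_eq_norm] at hj
    have := pow_le_pow_left₀ (norm_nonneg _) hj 2
    linarith
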